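/- Under the same hypotheses ($b_n \le b_{n+1} < 0$, $x-b_n = 2\cosh(\gamma_n) \ge 2$ for $n \le N$, $\psi_{-1}=0$, $\psi_0=1$, $\psi_{n+1} = (1+e^{-2\gamma_{n+1}})\psi_n - e^{-(\gamma_n+\gamma_{n+1})}\psi_{n-1}$), define $W_n = e^{\gamma_{n+1}}\psi_n - e^{-\gamma_n}\psi_{n-1}$ for $0 \le n \le N-1$. Then $W_n \le e^{\gamma_{n+1}}$ for all such $n$. -/
import Mathlib


theorem stmt_1 (b γ ψ W : ℤ → ℝ) (N : ℤ) (x : ℝ)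
    (hb : ∀ n : ℤ, b n ≤ b (n + 1)) (hbneg : ∀ n : ℤ, b n < 0)
    (hx : 0 < x ∧ x < 2)
    (hforb : ∀ n ≤ N, 2 ≤ x - b n)
    (hγ : ∀ n ≤ N, 0 ≤ γ n ∧ x - b n = 2 * Real.cosh (γ n))
    (hψm1 : ψ (-1) = 0) (hψ0 : ψ 0 = 1)
    (hrec : ∀ n : ℤ, 0 ≤ n → n < N →
      ψ (n + 1) = (1 + Real.exp (-2 * γ (n + 1))) * ψ n
        - Real.exp (-(γ n + γ (n + 1))) * ψ (n - 1))
    (hW : ∀ n : ℤ, 0 ≤ n → n ≤ N - 1 →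
      W n = Real.exp (γ (n + 1)) * ψ n - Real.exp (-γ n) * ψ (n - 1)) :
    ∀ n : ℤ, 0 ≤ n → n ≤ N - 1 → W n ≤ Real.exp (γ (n + 1)) := by
  have hmono : ∀ n : ℤ, n + 1 ≤ N → γ (n + 1) ≤ γ n := by
    intro n hn
    have h1 := hγ n (by omega)
    have h2 := hγ (n + 1) hn
    have hbn := hb n
    have hc : Real.cosh (γ (n + 1)) ≤ Real.cosh (γ n) := by nlinarith [h1.2, h2.2]
    have := Real.cosh_le_cosh.mp hc
    rwa [abs_of_nonneg h2.1, abs_of_nonneg h1.1] at this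
  have hpsi : ∀ n : ℤ, 0 ≤ n → n ≤ N - 1 →
      0 ≤ ψ (n - 1) ∧ 0 ≤ ψ n ∧
        Real.exp (-γ n) * ψ (n - 1) ≤ Real.exp (-γ (n + 1)) * ψ n := by
    refine Int.le_induction ?_ ?_
    · intro _
      refine ⟨?_, ?_, ?_⟩
      · norm_num [hψm1]
      · norm_num [hψ0]
      · norm_num [hψm1, hψ0]
        positivity
    · intro n hn ih hN1
      obtain ⟨h1, h2, h3⟩ := ih (by omega)
      have e1 : Real.exp (-2 * γ (n + 1)) =
          Real.exp (-γ (n + 1)) * Real.exp (-γ (n + 1)) := by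
        rw [← Real.exp_add]; congr 1; ring
      have e2 : Real.exp (-(γ n + γ (n + 1))) =
          Real.exp (-γ n) * Real.exp (-γ (n + 1)) := by
        rw [← Real.exp_add]; congr 1; ring
      have hrec' := hrec n (by omega) (by omega)
      have hstep : ψ n ≤ ψ (n + 1) := by
        rw [hrec', e1, e2]
        nlinarith [mul_le_mul_of_nonneg_left h3 (Real.exp_pos (-γ (n + 1))).le]
      have hψ1 : 0 ≤ ψ (n + 1) := le_trans h2 hstep
      have hm := hmono (n + 1) (by omega)
      have hexp : Real.exp (-γ (n + 1)) ≤ Real.exp (-γ (n + 1 + 1)) :=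
        Real.exp_le_exp.mpr (by linarith)
      refine ⟨by simpa using h2, hψ1, ?_⟩
      simp only [add_sub_cancel_right]
      exact mul_le_mul hexp hstep h2 (Real.exp_pos _).le
  refine Int.le_induction ?_ ?_
  · intro hN
    rw [hW 0 le_rfl hN]
    norm_num [hψm1, hψ0]
  · intro n hn ih hN1
    have ihW := ih (by omega)
    obtain ⟨h1, h2, h3⟩ := hpsi n hn (by omega)
    have hWdef := hW n hn (by omega)
    have hWn1 := hW (n + 1) (by omega) (by omega)
    simp only [add_sub_cancel_right] at hWn1
    have e1 : Real.exp (-2 * γ (n + 1)) =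
        Real.exp (-γ (n + 1)) * Real.exp (-γ (n + 1)) := by
      rw [← Real.exp_add]; congr 1; ring
    have e2 : Real.exp (-(γ n + γ (n + 1))) =
        Real.exp (-γ n) * Real.exp (-γ (n + 1)) := by
      rw [← Real.exp_add]; congr 1; ring
    have hm := hmono (n + 1) (by omega)
    have hA0 : 0 < Real.exp (γ (n + 1 + 1) - γ (n + 1)) := Real.exp_pos _
    have hA1 : Real.exp (γ (n + 1 + 1) - γ (n + 1)) ≤ 1 := by
      rw [← Real.exp_zero]
      exact Real.exp_le_exp.mpr (by linarith)
    have hAe : Real.exp (γ (n + 1 + 1)) =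
        Real.exp (γ (n + 1 + 1) - γ (n + 1)) * Real.exp (γ (n + 1)) := by
      rw [← Real.exp_add]; congr 1; ring
    have hF : Real.exp (γ (n + 1)) * Real.exp (-γ (n + 1)) = 1 := by
      rw [← Real.exp_add]; simp
    rw [hWn1, hrec n (by omega) (by omega), e1, e2]
    have hid : Real.exp (γ (n + 1 + 1)) *
          ((1 + Real.exp (-γ (n + 1)) * Real.exp (-γ (n + 1))) * ψ n -
            Real.exp (-γ n) * Real.exp (-γ (n + 1)) * ψ (n - 1)) -
          Real.exp (-γ (n + 1)) * ψ n
        = Real.exp (γ (n + 1 + 1) - γ (n + 1)) * W n +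
          (Real.exp (γ (n + 1 + 1) - γ (n + 1)) - 1) *
            (Real.exp (-γ (n + 1)) * ψ n) := by
      rw [hWdef, hAe]
      linear_combination (Real.exp (γ (n + 1 + 1) - γ (n + 1)) *
          Real.exp (-γ (n + 1)) * ψ n -
        Real.exp (γ (n + 1 + 1) - γ (n + 1)) *
          Real.exp (-γ n) * ψ (n - 1)) * hF
    rw [hid, hAe]
    nlinarith [mul_le_mul_of_nonneg_left ihW hA0.le,
      mul_nonneg (Real.exp_pos (-γ (n + 1))).le h2]
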